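/- arXiv:1403.0483 — 3 statements merged into one kernel-verified Lean document; each statement's English description precedes it below -/
import Mathlib

section
/- For nonnegative integers $i \le n$, $\sum_{k=0}^{n} \frac{(-n)_k}{k!} \binom{n-i+k}{k} \frac{1}{n-i+k+1} = (-1)^{n+i} \frac{n!\,(n-i)!}{(2n-i+1)!}$. -/
open Finset

/-- Pochhammer symbol `(x)_k = x (x+1) ⋯ (x+k-1)`. -/
noncomputable def poch (x : ℝ) (k : ℕ) : ℝ := (ascPochhammer ℝ k).eval x

open Polynomial

lemma prod_shift (a b : ℕ) :
    ∏ l ∈ range b, ((a : ℝ) + 1 + l) = (a + b).factorial / a.factorial := by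
  induction b with
  | zero =>
    simp [div_self (Nat.cast_ne_zero.mpr (Nat.factorial_ne_zero a) : ((a.factorial : ℝ)) ≠ 0)]
  | succ b ih =>
    rw [prod_range_succ, ih]
    have h1 : ((a.factorial : ℝ)) ≠ 0 := Nat.cast_ne_zero.mpr (Nat.factorial_ne_zero a)
    rw [Nat.add_succ, Nat.factorial_succ]
    push_cast
    field_simp
    ring

lemma fact_cast (b : ℕ) : ∏ x ∈ range b, ((x : ℝ) + 1) = (b.factorial : ℝ) := by
  rw [← Finset.prod_range_add_one_eq_factorial]
  push_cast
  rfl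

lemma prod_neg (j : ℕ) :
    ∏ l ∈ range j, ((l : ℝ) - j) = (-1) ^ j * j.factorial := by
  have h1 : ∀ l ∈ range j, ((l : ℝ) - j) = (-1) * ((j - l : ℕ) : ℝ) := by
    intro l hl
    have : l ≤ j := le_of_lt (mem_range.mp hl)
    push_cast [Nat.cast_sub this]
    ring
  rw [Finset.prod_congr rfl h1, Finset.prod_mul_distrib, Finset.prod_const, card_range]
  congr 1
  rw [← Nat.cast_prod]
  congr 1
  rw [← Finset.prod_range_reflect]
  have : ∀ l ∈ range j, j - (j - 1 - l) = l + 1 := by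
    intro l hl; have := mem_range.mp hl; omega
  rw [Finset.prod_congr rfl this, Finset.prod_range_add_one_eq_factorial]

lemma prod_Ico_sub (j n : ℕ) (h : j ≤ n) :
    ∏ l ∈ Ico (j + 1) (n + 1), ((l : ℝ) - j) = (n - j).factorial := by
  rw [Finset.prod_Ico_eq_prod_range]
  have h2 : n + 1 - (j + 1) = n - j := by omega
  rw [h2]
  have h3 : ∀ t ∈ range (n - j), ((j + 1 + t : ℕ) : ℝ) - j = (t : ℝ) + 1 := by
    intro t _; push_cast; ring
  rw [Finset.prod_congr rfl h3, fact_cast]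

lemma erase_split (n j : ℕ) (hj : j < n + 1) :
    (range (n + 1)).erase j = range j ∪ Ico (j + 1) (n + 1) := by
  ext l
  simp only [mem_erase, mem_range, mem_union, mem_Ico]
  omega

lemma key (n m : ℕ) (hm : m ≤ n) :
    ∑ k ∈ range (n + 1),
      (-1 : ℝ) ^ k * (n.choose k) * (((m + k).choose m : ℕ) : ℝ) / ((m : ℝ) + k + 1)
    = (-1) ^ m * (m.factorial : ℝ) * (n.factorial : ℝ) / (((n + m + 1).factorial : ℕ) : ℝ) := by
  set c : ℕ → ℝ := fun k => (-1 : ℝ) ^ k * (n.choose k) * (((m + k).choose m : ℕ) : ℝ) with hc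
  set P : ℝ[X] := ∑ k ∈ range (n + 1), Polynomial.C (c k) *
      ∏ l ∈ (range (n + 1)).erase k, (X + Polynomial.C (l : ℝ)) with hP
  set Q : ℝ[X] := Polynomial.C ((n.factorial : ℝ) / (m.factorial : ℝ)) *
      ∏ t ∈ range m, (Polynomial.C ((t : ℝ) + 1) - X) with hQ
  -- evaluation of P at -j
  have hPe : ∀ j, j < n + 1 → P.eval (-(j : ℝ)) = (n.factorial : ℝ) * ((m + j).choose m : ℕ) := by
    intro j hj
    rw [hP, eval_finset_sum]
    have hterm : ∀ k ∈ range (n + 1), (Polynomial.C (c k) *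
        ∏ l ∈ (range (n + 1)).erase k, (X + Polynomial.C (l : ℝ))).eval (-(j : ℝ))
        = c k * ∏ l ∈ (range (n + 1)).erase k, (-(j : ℝ) + l) := by
      intro k _
      simp [eval_prod]
    rw [Finset.sum_congr rfl hterm]
    rw [Finset.sum_eq_single j]
    · have hsplit : ∏ l ∈ (range (n + 1)).erase j, (-(j : ℝ) + l)
          = ((-1 : ℝ) ^ j * j.factorial) * (n - j).factorial := by
        have : ∀ l ∈ (range (n + 1)).erase j, (-(j : ℝ) + l) = (l : ℝ) - j := by
          intro l _; ring
        rw [Finset.prod_congr rfl this, erase_split n j hj]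
        rw [Finset.prod_union (by simp [Finset.disjoint_left]; omega)]
        rw [prod_neg, prod_Ico_sub j n (by omega)]
      rw [hsplit]
      simp only [hc]
      have hchoose : (n.choose j : ℝ) = (n.factorial : ℝ) / (j.factorial * (n - j).factorial) :=
        Nat.cast_choose ℝ (by omega)
      have h2 : (-1 : ℝ) ^ j * (-1 : ℝ) ^ j = 1 := by
        rw [← pow_add]; exact Even.neg_one_pow ⟨j, rfl⟩
      have hj1 : ((j.factorial : ℝ)) ≠ 0 := Nat.cast_ne_zero.mpr (Nat.factorial_ne_zero _)
      have hj2 : (((n - j).factorial : ℝ)) ≠ 0 := Nat.cast_ne_zero.mpr (Nat.factorial_ne_zero _)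
      rw [hchoose]
      field_simp
      ring_nf
      rw [show ((-1 : ℝ)) ^ (j * 2) = 1 by rw [mul_comm, pow_mul]; norm_num]
      ring
    · intro k _ hkj
      have hjmem : j ∈ (range (n + 1)).erase k :=
        Finset.mem_erase.mpr ⟨fun h => hkj h.symm, mem_range.mpr hj⟩
      rw [Finset.prod_eq_zero hjmem (by ring), mul_zero]
    · intro h
      exact absurd (mem_range.mpr hj) h
  -- evaluation of Q at -j
  have hQe : ∀ j : ℕ, Q.eval (-(j : ℝ)) = (n.factorial : ℝ) * ((m + j).choose m : ℕ) := by
    intro j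
    rw [hQ]
    simp only [eval_mul, eval_C, eval_prod, eval_sub, eval_add, eval_X, eval_one]
    have : ∀ t ∈ range m, ((t : ℝ) + 1 - (-(j : ℝ))) = (j : ℝ) + 1 + t := by
      intro t _; ring
    rw [Finset.prod_congr rfl this, prod_shift j m]
    have hchoose : ((m + j).choose m : ℝ)
        = ((m + j).factorial : ℝ) / (m.factorial * j.factorial) := by
      rw [Nat.cast_choose ℝ (by omega : m ≤ m + j), show m + j - m = j from by omega]
    rw [hchoose]
    have h1 : ((m.factorial : ℝ)) ≠ 0 := Nat.cast_ne_zero.mpr (Nat.factorial_ne_zero _)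
    have h2 : ((j.factorial : ℝ)) ≠ 0 := Nat.cast_ne_zero.mpr (Nat.factorial_ne_zero _)
    rw [Nat.add_comm j m]
    field_simp
    try ring
  -- degree bounds
  have hPdeg : P.natDegree ≤ n := by
    rw [hP]
    apply Polynomial.natDegree_sum_le_of_forall_le
    intro k hk
    refine le_trans (Polynomial.natDegree_mul_le) ?_
    rw [Polynomial.natDegree_C, zero_add]
    refine le_trans (Polynomial.natDegree_prod_le _ _) ?_
    simp only [Polynomial.natDegree_X_add_C]
    rw [Finset.sum_const, smul_eq_mul, mul_one, Finset.card_erase_of_mem hk, card_range]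
    omega
  have hQdeg : Q.natDegree ≤ n := by
    rw [hQ]
    refine le_trans (Polynomial.natDegree_mul_le) ?_
    rw [Polynomial.natDegree_C, zero_add]
    refine le_trans (Polynomial.natDegree_prod_le _ _) ?_
    calc ∑ t ∈ range m, (Polynomial.C ((t : ℝ) + 1) - X).natDegree
        ≤ ∑ t ∈ range m, 1 := by
          refine Finset.sum_le_sum (fun t _ => ?_)
          refine le_trans (Polynomial.natDegree_sub_le _ _) ?_
          rw [Polynomial.natDegree_C, Polynomial.natDegree_X]
          simp
      _ = m := by simp
      _ ≤ n := hm
  -- P = Q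
  have hPQ : P = Q := by
    rw [← sub_eq_zero]
    apply Polynomial.eq_zero_of_natDegree_lt_card_of_eval_eq_zero' _
      ((range (n + 1)).image (fun j : ℕ => -(j : ℝ)))
    · intro x hx
      obtain ⟨j, hj, rfl⟩ := Finset.mem_image.mp hx
      rw [eval_sub, hPe j (mem_range.mp hj), hQe j, sub_self]
    · have hinj : Function.Injective (fun j : ℕ => -(j : ℝ)) := by
        intro a b hab
        exact Nat.cast_injective (neg_injective hab)
      rw [Finset.card_image_of_injective _ hinj, card_range]
      calc (P - Q).natDegree ≤ max P.natDegree Q.natDegree := Polynomial.natDegree_sub_le _ _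
        _ ≤ n := max_le hPdeg hQdeg
        _ < n + 1 := Nat.lt_succ_self n
  -- evaluate at m + 1
  have hD : (((m + (n + 1)).factorial : ℝ)) / (m.factorial : ℝ) ≠ 0 := by
    apply div_ne_zero <;> exact Nat.cast_ne_zero.mpr (Nat.factorial_ne_zero _)
  have hPe2 : P.eval ((m : ℝ) + 1)
      = (((m + (n + 1)).factorial : ℝ) / (m.factorial : ℝ)) *
        ∑ k ∈ range (n + 1), c k / ((m : ℝ) + k + 1) := by
    rw [hP, eval_finset_sum, Finset.mul_sum]
    refine Finset.sum_congr rfl (fun k hk => ?_)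
    simp only [eval_mul, eval_C, eval_prod, eval_add, eval_X]
    have hfull : ((m : ℝ) + 1 + k) * ∏ l ∈ (range (n + 1)).erase k, ((m : ℝ) + 1 + l)
        = ((m + (n + 1)).factorial : ℝ) / (m.factorial : ℝ) := by
      rw [Finset.mul_prod_erase _ (fun l : ℕ => (m : ℝ) + 1 + l) hk, prod_shift m (n + 1)]
    have hne : ((m : ℝ) + 1 + k) ≠ 0 := by positivity
    have : ∏ l ∈ (range (n + 1)).erase k, ((m : ℝ) + 1 + l)
        = (((m + (n + 1)).factorial : ℝ) / (m.factorial : ℝ)) / ((m : ℝ) + 1 + k) := by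
      rw [eq_div_iff hne, mul_comm]
      exact hfull
    rw [this]
    have hne2 : ((m : ℝ) + k + 1) ≠ 0 := by positivity
    field_simp
    ring
  have hQe2 : Q.eval ((m : ℝ) + 1) = (-1) ^ m * (n.factorial : ℝ) := by
    rw [hQ]
    simp only [eval_mul, eval_C, eval_prod, eval_sub, eval_add, eval_X]
    have : ∀ t ∈ range m, ((t : ℝ) + 1 - ((m : ℝ) + 1)) = (t : ℝ) - m := by
      intro t _; ring
    rw [Finset.prod_congr rfl this, prod_neg]
    have h1 : ((m.factorial : ℝ)) ≠ 0 := Nat.cast_ne_zero.mpr (Nat.factorial_ne_zero _)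
    field_simp
  have hfinal : (((m + (n + 1)).factorial : ℝ) / (m.factorial : ℝ)) *
      ∑ k ∈ range (n + 1), c k / ((m : ℝ) + k + 1) = (-1) ^ m * (n.factorial : ℝ) := by
    rw [← hPe2, hPQ, hQe2]
  have hsum : ∑ k ∈ range (n + 1), c k / ((m : ℝ) + k + 1)
      = (-1) ^ m * (n.factorial : ℝ) * (m.factorial : ℝ) / ((m + (n + 1)).factorial : ℝ) := by
    have h1 : ((m.factorial : ℝ)) ≠ 0 := Nat.cast_ne_zero.mpr (Nat.factorial_ne_zero _)
    have h2 : (((m + (n + 1)).factorial : ℝ)) ≠ 0 := Nat.cast_ne_zero.mpr (Nat.factorial_ne_zero _)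
    field_simp at hfinal ⊢
    linarith [hfinal]
  calc ∑ k ∈ range (n + 1),
      (-1 : ℝ) ^ k * (n.choose k) * (((m + k).choose m : ℕ) : ℝ) / ((m : ℝ) + k + 1)
      = ∑ k ∈ range (n + 1), c k / ((m : ℝ) + k + 1) := rfl
    _ = (-1) ^ m * (n.factorial : ℝ) * (m.factorial : ℝ) / ((m + (n + 1)).factorial : ℝ) := hsum
    _ = (-1) ^ m * (m.factorial : ℝ) * (n.factorial : ℝ) / (((n + m + 1).factorial : ℕ) : ℝ) := by
        rw [show m + (n + 1) = n + m + 1 by omega]; ring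

theorem stmt_1 (n i : ℕ) (hi : i ≤ n) :
    ∑ k ∈ Finset.range (n + 1),
      poch (-(n : ℝ)) k / (k.factorial : ℝ) * ((n - i + k).choose k : ℝ)
        * (1 / ((n : ℝ) - i + k + 1))
    = (-1) ^ (n + i) * (n.factorial : ℝ) * ((n - i).factorial : ℝ)
        / ((2 * n - i + 1).factorial : ℝ) := by
  set m := n - i with hm
  have hmn : m ≤ n := Nat.sub_le n i
  have hcast : (n : ℝ) - i = (m : ℝ) := by
    rw [hm, Nat.cast_sub hi]
  rw [hcast]
  have hterm : ∀ k ∈ range (n + 1),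
      poch (-(n : ℝ)) k / (k.factorial : ℝ) * ((m + k).choose k : ℝ)
        * (1 / ((m : ℝ) + k + 1))
      = (-1 : ℝ) ^ k * (n.choose k) * (((m + k).choose m : ℕ) : ℝ) / ((m : ℝ) + k + 1) := by
    intro k hk
    have hpoch : poch (-(n : ℝ)) k = (-1) ^ k * (n.descFactorial k : ℝ) := by
      rw [poch, ascPochhammer_eval_neg_eq_descPochhammer,
        descPochhammer_eval_eq_descFactorial]
    have hdesc : (n.descFactorial k : ℝ) = (k.factorial : ℝ) * (n.choose k : ℝ) := by
      rw [Nat.descFactorial_eq_factorial_mul_choose]; push_cast; ring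
    have hch : (m + k).choose k = (m + k).choose m := by
      rw [← Nat.choose_symm (Nat.le_add_left k m)]
      congr 1
      omega
    have hkf : ((k.factorial : ℝ)) ≠ 0 := Nat.cast_ne_zero.mpr (Nat.factorial_ne_zero _)
    rw [hpoch, hdesc, hch]
    field_simp
  rw [Finset.sum_congr rfl hterm, key n m hmn]
  rw [show 2 * n - i + 1 = n + m + 1 from by omega]
  rw [show ((-1 : ℝ)) ^ (n + i) = ((-1 : ℝ)) ^ m from by
    rw [show n + i = m + 2 * i from by omega, pow_add, pow_mul]; norm_num]
  ring
end

section
/- For an odd positive integer $i \le n$, define the polynomial $h^n_{n-i}(t) = \sum_{k=0}^{n} d^i_{n,k} t^k$ on $[0,1)$ where $d^i_{n,k} = (-1)^n \frac{\sqrt{2n-2i+1}}{(-n)_i} \frac{(-n)_k (n-i+1)_k}{(k!)^2} \prod_{m=0}^{(i-1)/2}(n+k+1-2m) \prod_{m=0}^{(i-3)/2}(n-k-1-2m)$. Then $\int_0^1 t^s h^n_{n-i}(t)\,dt = 0$ for every integer $0 \le s < n-i$. -/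
open Finset

/-- The coefficient `d^i_{n,k}` (for odd `i`): the product
`∏_{m=0}^{(i-1)/2}` has `(i+1)/2` factors and `∏_{m=0}^{(i-3)/2}` has `(i-1)/2` factors. -/
noncomputable def d (n i k : ℕ) : ℝ :=
  (-1) ^ n * Real.sqrt (2 * (n : ℝ) - 2 * i + 1) / poch (-(n : ℝ)) i *
    (poch (-(n : ℝ)) k * poch ((n : ℝ) - i + 1) k / ((k.factorial : ℝ)) ^ 2) *
    (∏ m ∈ Finset.range ((i + 1) / 2), ((n : ℝ) + k + 1 - 2 * m)) *
    (∏ m ∈ Finset.range ((i - 1) / 2), ((n : ℝ) - k - 1 - 2 * m))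

/-- The wavelet polynomial `h^n_{n-i}(t) = ∑_{k=0}^n d^i_{n,k} t^k` on `[0,1)`. -/
noncomputable def h (n i : ℕ) (t : ℝ) : ℝ := ∑ k ∈ Finset.range (n + 1), d n i k * t ^ k

open Polynomial fwdDiff

lemma poch_zero (x : ℝ) : poch x 0 = 1 := by simp [poch]

lemma poch_succ (x : ℝ) (k : ℕ) : poch x (k + 1) = poch x k * (x + k) := by
  simp [poch, ascPochhammer_succ_right]

lemma poch_neg_nat (n k : ℕ) (hk : k ≤ n) :
    poch (-(n : ℝ)) k = (-1) ^ k * k.factorial * n.choose k := by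
  induction k with
  | zero => simp [poch_zero]
  | succ k ih =>
    have hk' : k ≤ n := by omega
    have hkn : k < n := by omega
    rw [poch_succ, ih hk']
    have key : (n.choose (k+1) : ℝ) * (k+1) = n.choose k * (n - k) := by
      have := Nat.choose_succ_right_eq n k
      have h2 : ((n.choose (k+1) * (k+1) : ℕ) : ℝ) = ((n.choose k * (n - k) : ℕ) : ℝ) := by
        exact_mod_cast congrArg (Nat.cast (R := ℝ)) this
      push_cast [Nat.cast_sub hk'] at h2
      convert h2 using 2
    push_cast [Nat.factorial_succ]
    linear_combination ((-1:ℝ)^k * k.factorial) * key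

lemma poch_nat_succ (N k : ℕ) :
    poch ((N : ℝ) + 1) k = (N + k).factorial / N.factorial := by
  induction k with
  | zero => simp [poch_zero, div_self (by positivity : (N.factorial:ℝ) ≠ 0)]
  | succ k ih =>
    rw [poch_succ, ih]
    have h1 : (N + (k+1)).factorial = (N + k).factorial * (N + k + 1) := by
      rw [show N + (k+1) = (N + k) + 1 by ring, Nat.factorial_succ]; ring
    rw [h1, div_mul_eq_mul_div]
    congr 1
    push_cast
    ring

lemma factorial_add_eq_prod (N k : ℕ) :
    ((N + k).factorial : ℝ) = k.factorial * ∏ j ∈ range N, ((k : ℝ) + j + 1) := by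
  induction N with
  | zero => simp
  | succ N ih =>
    rw [show N + 1 + k = (N + k) + 1 by ring, Nat.factorial_succ, prod_range_succ]
    push_cast [ih]
    ring


lemma leadingCoeff_taylor_one (p : ℝ[X]) :
    (Polynomial.taylor 1 p).leadingCoeff = p.leadingCoeff := by
  rw [Polynomial.leadingCoeff, Polynomial.leadingCoeff, Polynomial.natDegree_taylor,
    Polynomial.taylor_coeff]
  have hle := Polynomial.natDegree_hasseDeriv_le p p.natDegree
  rw [Nat.sub_self] at hle
  rw [Polynomial.eq_C_of_natDegree_le_zero hle]
  rw [Polynomial.eval_C, Polynomial.hasseDeriv_coeff]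
  simp

lemma fwdDiff_iter_poly_zero : ∀ (n : ℕ) (p : ℝ[X]), p.degree < n →
    (fwdDiff (1:ℝ))^[n] (fun x : ℝ => p.eval x) = 0 := by
  intro n
  induction n with
  | zero =>
    intro p hp
    have : p = 0 := by
      rw [← Polynomial.degree_eq_bot]
      exact Nat.WithBot.lt_zero_iff.mp (by exact_mod_cast hp)
    subst this
    funext x; simp
  | succ n ih =>
    intro p hp
    rw [Function.iterate_succ_apply]
    have hΔ : fwdDiff (1:ℝ) (fun x : ℝ => p.eval x)
        = fun x : ℝ => (Polynomial.taylor 1 p - p).eval x := by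
      funext x
      simp [fwdDiff, Polynomial.taylor_eval]
    rw [hΔ]
    apply ih
    by_cases hp0 : p = 0
    · subst hp0
      simp only [map_zero, sub_zero, Polynomial.degree_zero]
      exact_mod_cast WithBot.bot_lt_coe n
    · have htne : Polynomial.taylor 1 p ≠ 0 := by
        intro hzero
        exact hp0 (Polynomial.taylor_injective 1 (by rw [hzero, map_zero]))
      have hdeq : (Polynomial.taylor 1 p).degree = p.degree := by
        rw [Polynomial.degree_eq_natDegree htne, Polynomial.degree_eq_natDegree hp0,
          Polynomial.natDegree_taylor]
      have hlt : (Polynomial.taylor 1 p - p).degree < p.degree :=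
        hdeq ▸ Polynomial.degree_sub_lt hdeq htne (leadingCoeff_taylor_one p)
      have hple : p.natDegree ≤ n := by
        have := (Polynomial.natDegree_lt_iff_degree_lt hp0).mpr hp
        omega
      calc (Polynomial.taylor 1 p - p).degree < p.degree := hlt
        _ = (p.natDegree : WithBot ℕ) := Polynomial.degree_eq_natDegree hp0
        _ ≤ (n : WithBot ℕ) := by exact_mod_cast hple

lemma alt_sum_choose_poly_zero (n : ℕ) (p : ℝ[X]) (hp : p.degree < n) :
    ∑ k ∈ range (n + 1), (-1 : ℝ) ^ k * (n.choose k) * p.eval (k:ℝ) = 0 := by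
  have key := fwdDiff_iter_eq_sum_shift (1:ℝ) (fun x : ℝ => p.eval x) n 0
  rw [fwdDiff_iter_poly_zero n p hp] at key
  simp only [Pi.zero_apply, zsmul_eq_mul, smul_eq_mul, zero_add, nsmul_eq_mul, mul_one] at key
  have key2 : (0:ℝ) = ∑ k ∈ range (n+1), (-1:ℝ)^(n-k) * (n.choose k) * p.eval (k:ℝ) := by
    refine key.trans (Finset.sum_congr rfl fun k hk => ?_)
    push_cast
    ring
  have : ∑ k ∈ range (n + 1), (-1 : ℝ) ^ k * (n.choose k) * p.eval (k:ℝ)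
      = (-1:ℝ)^n * ∑ k ∈ range (n+1), (-1:ℝ)^(n-k) * (n.choose k) * p.eval (k:ℝ) := by
    rw [Finset.mul_sum]
    apply Finset.sum_congr rfl
    intro k hk
    rw [mem_range] at hk
    have hkn : k ≤ n := by omega
    have : (-1:ℝ)^n = (-1:ℝ)^(n-k) * (-1:ℝ)^k := by
      rw [← pow_add]; congr 1; omega
    have hsq : (-1:ℝ)^(n-k) * (-1:ℝ)^(n-k) = 1 := by
      rw [← pow_add, ← two_mul, pow_mul]; norm_num
    rw [this]
    linear_combination (-((-1:ℝ)^k * (n.choose k : ℝ) * p.eval (k:ℝ))) * hsq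
  rw [this, ← key2, mul_zero]
theorem stmt_5 (n i s : ℕ) (hodd : Odd i) (hi : 0 < i) (hin : i ≤ n)
    (hs : s < n - i) :
    ∫ t in (0:ℝ)..1, t ^ s * h n i t = 0 := by
  set N := n - i with hN
  have hNi : N + i = n := by omega
  -- the polynomial Q
  set Q : Polynomial ℝ :=
      (∏ j ∈ (Finset.range N).erase s, (Polynomial.X + Polynomial.C ((j:ℝ)+1))) *
      (∏ m ∈ Finset.range ((i + 1) / 2), (Polynomial.X + Polynomial.C ((n:ℝ)+1-2*m))) *
      (∏ m ∈ Finset.range ((i - 1) / 2), (Polynomial.C ((n:ℝ)-1-2*m) - Polynomial.X)) with hQ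
  -- degree bound
  have hcard : ((Finset.range N).erase s).card = N - 1 := by
    rw [Finset.card_erase_of_mem (Finset.mem_range.mpr hs), Finset.card_range]
  have hdeg : Q.degree < (n : ℕ) := by
    have h1 : Q.natDegree ≤ (N - 1) + (i + 1) / 2 + (i - 1) / 2 := by
      rw [hQ]
      refine le_trans (Polynomial.natDegree_mul_le) ?_
      have hPA : (∏ j ∈ (Finset.range N).erase s,
          (Polynomial.X + Polynomial.C ((j:ℝ)+1))).natDegree ≤ N - 1 := by
        refine le_trans (Polynomial.natDegree_prod_le _ _) ?_
        refine le_trans (Finset.sum_le_card_nsmul _ _ 1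
          fun x _ => le_of_eq (Polynomial.natDegree_X_add_C _)) ?_
        simp [hcard]
      have hPB : (∏ m ∈ Finset.range ((i + 1) / 2),
          (Polynomial.X + Polynomial.C ((n:ℝ)+1-2*m))).natDegree ≤ (i + 1) / 2 := by
        refine le_trans (Polynomial.natDegree_prod_le _ _) ?_
        refine le_trans (Finset.sum_le_card_nsmul _ _ 1
          fun x _ => le_of_eq (Polynomial.natDegree_X_add_C _)) ?_
        simp
      have hPC : (∏ m ∈ Finset.range ((i - 1) / 2),
          (Polynomial.C ((n:ℝ)-1-2*m) - Polynomial.X)).natDegree ≤ (i - 1) / 2 := by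
        refine le_trans (Polynomial.natDegree_prod_le _ _) ?_
        refine le_trans (Finset.sum_le_card_nsmul _ _ 1 fun x _ => ?_) (by simp)
        have hneg : Polynomial.C ((n:ℝ)-1-2*x) - Polynomial.X
            = -(Polynomial.X - Polynomial.C ((n:ℝ)-1-2*x)) := by ring
        rw [hneg, Polynomial.natDegree_neg, Polynomial.natDegree_X_sub_C]
      have := add_le_add (add_le_add (le_trans Polynomial.natDegree_mul_le
        (add_le_add hPA hPB)) hPC) (le_refl 0)
      omega
    have hsum : (N - 1) + (i + 1) / 2 + (i - 1) / 2 = n - 1 := by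
      obtain ⟨m, rfl⟩ := hodd
      omega
    have h2 : Q.natDegree < n := by omega
    calc Q.degree ≤ (Q.natDegree : WithBot ℕ) := Polynomial.degree_le_natDegree
      _ < (n : WithBot ℕ) := by exact_mod_cast h2
  -- compute the integral as a sum
  have hint : ∫ t in (0:ℝ)..1, t ^ s * h n i t
      = ∑ k ∈ Finset.range (n + 1), d n i k * (1 / ((s:ℝ) + k + 1)) := by
    have heq : ∀ t : ℝ, t ^ s * h n i t
        = ∑ k ∈ Finset.range (n + 1), d n i k * t ^ (s + k) := by
      intro t
      rw [h, Finset.mul_sum]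
      refine Finset.sum_congr rfl fun k _ => ?_
      rw [pow_add]; ring
    rw [intervalIntegral.integral_congr (fun t _ => heq t)]
    rw [intervalIntegral.integral_finset_sum]
    · refine Finset.sum_congr rfl fun k _ => ?_
      rw [intervalIntegral.integral_const_mul, integral_pow]
      norm_num
    · intro k _
      exact (continuous_const.mul (continuous_pow _)).intervalIntegrable 0 1
  -- the constant A
  set A : ℝ := (-1) ^ n * Real.sqrt (2 * (n : ℝ) - 2 * i + 1) / poch (-(n : ℝ)) i with hA
  -- per-term identity
  have pert : ∀ k ∈ Finset.range (n + 1), d n i k * (1 / ((s:ℝ) + k + 1))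
      = (A / N.factorial) * ((-1:ℝ) ^ k * (n.choose k) * Q.eval (k:ℝ)) := by
    intro k hk
    rw [Finset.mem_range] at hk
    have hkn : k ≤ n := by omega
    have hcast : (n : ℝ) - i + 1 = (N : ℝ) + 1 := by
      push_cast [hN, Nat.cast_sub hin]; ring
    have hQeval : Q.eval (k:ℝ) = (∏ j ∈ (Finset.range N).erase s, ((k:ℝ) + (j + 1))) *
        (∏ m ∈ Finset.range ((i + 1) / 2), ((n : ℝ) + k + 1 - 2 * m)) *
        (∏ m ∈ Finset.range ((i - 1) / 2), ((n : ℝ) - k - 1 - 2 * m)) := by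
      rw [hQ]
      simp only [Polynomial.eval_mul, Polynomial.eval_prod, Polynomial.eval_add,
        Polynomial.eval_sub, Polynomial.eval_X, Polynomial.eval_C]
      congr 1
      · congr 1
        exact Finset.prod_congr rfl fun m _ => by ring
      · exact Finset.prod_congr rfl fun m _ => by ring
    have hprod : (∏ j ∈ Finset.range N, ((k:ℝ) + j + 1))
        = ((k:ℝ) + s + 1) * ∏ j ∈ (Finset.range N).erase s, ((k:ℝ) + (j + 1)) := by
      rw [← Finset.mul_prod_erase (Finset.range N) (fun j => (k:ℝ) + j + 1)
        (Finset.mem_range.mpr hs)]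
      congr 1
      exact Finset.prod_congr rfl fun j _ => by ring
    rw [d, hcast, poch_neg_nat n k hkn, poch_nat_succ, factorial_add_eq_prod, hprod, hQeval]
    have hkf : (k.factorial : ℝ) ≠ 0 := by positivity
    have hNf : (N.factorial : ℝ) ≠ 0 := by positivity
    have hsk : (s:ℝ) + k + 1 ≠ 0 := by positivity
    rw [← hA]
    field_simp
    ring
  rw [hint, Finset.sum_congr rfl pert, ← Finset.mul_sum,
    alt_sum_choose_poly_zero n Q hdeg, mul_zero]
end

section
/- For an odd positive integer $i \le n$ and a nonnegative integer $s$ with $s > n$ and $s \equiv n-i+1 \pmod 2$, $\int_0^1 h^n_{n-i}(t)\, \frac{t^s}{s!}\, dt = \frac{\sqrt{2n-2i+1}}{(s-n+i)!\,(s+1)_{n+1}} \prod_{m=0}^{(i-1)/2}(n-s-2m) \prod_{m=0}^{(i-3)/2}(n+s-2m)$, where $h^n_{n-i}(t) = \sum_{k=0}^n d^i_{n,k} t^k$ with $d^i_{n,k} = (-1)^n \frac{\sqrt{2n-2i+1}}{(-n)_i} \frac{(-n)_k (n-i+1)_k}{(k!)^2} \prod_{m=0}^{(i-1)/2}(n+k+1-2m)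 \prod_{m=0}^{(i-3)/2}(n-k-1-2m)$. -/
open Finset

open Polynomial

lemma poch_eq_prod (x : ℝ) (k : ℕ) : poch x k = ∏ r ∈ range k, (x + r) := by
  induction k with
  | zero => simp [poch]
  | succ m ih => rw [poch, ascPochhammer_succ_eval, ← poch, ih, prod_range_succ]

lemma poch_pos_fact (a : ℕ) (k : ℕ) : poch ((a:ℝ)+1) k * (a.factorial : ℝ) = ((a+k).factorial : ℝ) := by
  induction k with
  | zero => simp [poch]
  | succ m ih =>
      rw [poch, ascPochhammer_succ_eval, ← poch]
      have : (a + (m+1)).factorial = (a+m+1) * (a+m).factorial := by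
        rw [show a + (m+1) = (a+m)+1 by ring, Nat.factorial_succ]
      rw [this]
      push_cast
      nlinarith [ih]

lemma poch_neg_fact {j n : ℕ} (h : j ≤ n) :
    poch (-(n:ℝ)) j * ((n-j).factorial : ℝ) = (-1)^j * (n.factorial : ℝ) := by
  induction j with
  | zero => simp [poch]
  | succ m ih =>
      have hm : m ≤ n := by omega
      have ihm := ih hm
      have hnm : (0:ℝ) < ((n - m : ℕ) : ℝ) := by
        have : 0 < n - m := by omega
        exact_mod_cast this
      apply mul_right_cancel₀ (ne_of_gt hnm)
      have hfac : ((n-m).factorial : ℝ) = ((n - (m+1)).factorial : ℝ) * ((n-m : ℕ) : ℝ) := by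
        have : (n - m) = (n - (m+1)) + 1 := by omega
        rw [this, Nat.factorial_succ]
        push_cast
        ring
      rw [poch, ascPochhammer_succ_eval, ← poch]
      have hcast : (-(n:ℝ) + m) = -(((n-m:ℕ)):ℝ) := by
        have : ((n - m : ℕ) : ℝ) = (n:ℝ) - m := by
          have := hm; push_cast [this]; ring
        rw [this]; ring
      rw [hcast]
      calc poch (-(n:ℝ)) m * -((n-m:ℕ):ℝ) * ((n-(m+1)).factorial : ℝ) * ((n-m:ℕ):ℝ)
          = (poch (-(n:ℝ)) m * ((n-m).factorial : ℝ)) * (-((n-m:ℕ):ℝ)) := by rw [hfac]; ring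
        _ = (-1)^m * (n.factorial:ℝ) * (-((n-m:ℕ):ℝ)) := by rw [ihm]
        _ = (-1)^(m+1) * (n.factorial:ℝ) * ((n-m:ℕ):ℝ) := by ring

lemma prod_range_add_one_fact (j : ℕ) : ∏ m ∈ range j, ((m:ℝ) + 1) = (j.factorial : ℝ) := by
  induction j with
  | zero => simp
  | succ m ih => rw [prod_range_succ, ih, Nat.factorial_succ]; push_cast; ring

lemma prod_lower {j : ℕ} : ∏ m ∈ range j, ((m:ℝ) - j) = (-1)^j * (j.factorial : ℝ) := by
  have h1 : ∏ m ∈ range j, ((m:ℝ) - j) = ∏ m ∈ range j, (-1) * ((j:ℝ) - m) := by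
    apply prod_congr rfl; intro m _; ring
  rw [h1, prod_mul_distrib, prod_const, card_range]
  congr 1
  have h2 := prod_range_reflect (fun m => (j:ℝ) - m) j
  rw [← h2]
  rw [← prod_range_add_one_fact j]
  apply prod_congr rfl
  intro m hm
  simp only [mem_range] at hm
  have : ((j - 1 - m : ℕ) : ℝ) = (j:ℝ) - 1 - m := by
    have h3 : j - 1 - m = j - (1 + m) := by omega
    rw [h3]
    have : (1 + m) ≤ j := by omega
    push_cast [Nat.cast_sub this]
    ring
  rw [this]; ring

lemma prod_upper {j n : ℕ} (h : j ≤ n) :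
    ∏ m ∈ Ico (j+1) (n+1), ((m:ℝ) - j) = ((n-j).factorial : ℝ) := by
  rw [prod_Ico_eq_prod_range]
  have : n + 1 - (j+1) = n - j := by omega
  rw [this, ← prod_range_add_one_fact (n-j)]
  apply prod_congr rfl
  intro m _
  push_cast
  ring

lemma prod_erase_sub {j n : ℕ} (h : j ≤ n) :
    ∏ m ∈ (range (n+1)).erase j, ((m:ℝ) - j)
      = (-1)^j * (j.factorial : ℝ) * ((n-j).factorial : ℝ) := by
  have hset : (range (n+1)).erase j = (range j) ∪ (Ico (j+1) (n+1)) := by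
    ext m
    simp only [mem_erase, mem_range, mem_union, mem_Ico]
    omega
  have hdisj : Disjoint (range j) (Ico (j+1) (n+1)) := by
    simp only [Finset.disjoint_left, mem_range, mem_Ico]
    omega
  rw [hset, prod_union hdisj, prod_lower, prod_upper h]

lemma prod_desc {m s : ℕ} (h : m ≤ s) :
    (∏ r ∈ range m, ((s:ℝ) - r)) * ((s-m).factorial : ℝ) = (s.factorial : ℝ) := by
  have h1 : ∏ r ∈ range m, ((s:ℝ) - r) = poch (((s - m : ℕ) : ℝ) + 1) m := by
    rw [poch_eq_prod]
    rw [← prod_range_reflect (fun r => (s:ℝ) - r) m]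
    apply prod_congr rfl
    intro r hr
    simp only [mem_range] at hr
    have h2 : ((m - 1 - r : ℕ) : ℝ) = (m:ℝ) - 1 - r := by
      have h3 : m - 1 - r = m - (1 + r) := by omega
      have h4 : 1 + r ≤ m := by omega
      rw [h3, Nat.cast_sub h4]
      push_cast; ring
    have h5 : ((s - m : ℕ):ℝ) = (s:ℝ) - m := by
      rw [Nat.cast_sub h]
    rw [h2, h5]
    ring
  rw [h1, poch_pos_fact]
  have h6 : s - m + m = s := by omega
  rw [h6]

lemma scalar_id {n i j : ℕ} (hin : i ≤ n) (hj : j ≤ n) :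
    ((-1:ℝ)^n / poch (-(n:ℝ)) i) * (poch (-(n:ℝ)) j * poch ((n:ℝ)-(i:ℝ)+1) j / ((j.factorial:ℝ))^2)
      * ((-1)^j * (j.factorial:ℝ) * ((n-j).factorial:ℝ))
    = (-1)^(n-i) * poch ((j:ℝ)+1) (n-i) := by
  have fni : ((n-i).factorial:ℝ) ≠ 0 := Nat.cast_ne_zero.mpr (Nat.factorial_ne_zero _)
  have fnj : ((n-j).factorial:ℝ) ≠ 0 := Nat.cast_ne_zero.mpr (Nat.factorial_ne_zero _)
  have fj : ((j.factorial:ℝ)) ≠ 0 := Nat.cast_ne_zero.mpr (Nat.factorial_ne_zero _)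
  have fn : ((n.factorial:ℝ)) ≠ 0 := Nat.cast_ne_zero.mpr (Nat.factorial_ne_zero _)
  have hA := poch_neg_fact hin
  have hB := poch_neg_fact hj
  have hC : poch ((n:ℝ)-(i:ℝ)+1) j * ((n-i).factorial : ℝ) = (((n-i)+j).factorial : ℝ) := by
    have : (n:ℝ)-(i:ℝ)+1 = ((n-i:ℕ):ℝ)+1 := by push_cast [Nat.cast_sub hin]; ring
    rw [this, poch_pos_fact]
  have hD : poch ((j:ℝ)+1) (n-i) * (j.factorial : ℝ) = ((j+(n-i)).factorial : ℝ) :=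
    poch_pos_fact j (n-i)
  have hAz : poch (-(n:ℝ)) i ≠ 0 := by
    intro hz
    rw [hz, zero_mul] at hA
    have : ((-1:ℝ))^i * (n.factorial:ℝ) ≠ 0 := by
      apply mul_ne_zero _ fn
      exact pow_ne_zero _ (by norm_num)
    exact this hA.symm
  have hA' : poch (-(n:ℝ)) i = (-1)^i * (n.factorial:ℝ) / ((n-i).factorial:ℝ) :=
    (eq_div_iff fni).mpr hA
  have hB' : poch (-(n:ℝ)) j = (-1)^j * (n.factorial:ℝ) / ((n-j).factorial:ℝ) :=
    (eq_div_iff fnj).mpr hB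
  have hC' : poch ((n:ℝ)-(i:ℝ)+1) j = (((n-i)+j).factorial:ℝ) / ((n-i).factorial:ℝ) :=
    (eq_div_iff fni).mpr hC
  have hD' : poch ((j:ℝ)+1) (n-i) = ((j+(n-i)).factorial:ℝ) / (j.factorial:ℝ) :=
    (eq_div_iff fj).mpr hD
  have hsj : ((-1:ℝ))^j * (-1)^j = 1 := by
    rw [← pow_add]; exact Even.neg_one_pow ⟨j, rfl⟩
  have hsi : ((-1:ℝ))^i * (-1)^i = 1 := by
    rw [← pow_add]; exact Even.neg_one_pow ⟨i, rfl⟩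
  have hni : ((-1:ℝ))^(n-i) = (-1)^n * (-1)^i := by
    have h1 : ((-1:ℝ))^(n-i) * (-1)^i = (-1)^n := by rw [← pow_add]; congr 1; omega
    calc ((-1:ℝ))^(n-i) = ((-1:ℝ))^(n-i) * ((-1)^i * (-1)^i) := by rw [hsi, mul_one]
      _ = (((-1:ℝ))^(n-i) * (-1)^i) * (-1)^i := by ring
      _ = (-1)^n * (-1)^i := by rw [h1]
  have hfac : ((n-i)+j).factorial = (j+(n-i)).factorial := by rw [Nat.add_comm]
  rw [hA', hB', hC', hD', hni, hfac]
  have hAz' : ((-1:ℝ))^i ≠ 0 := pow_ne_zero _ (by norm_num)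
  field_simp
  ring_nf
  have h2j : ((-1:ℝ))^(j*2) = 1 := by rw [pow_mul']; norm_num
  have h2i : ((-1:ℝ))^(i*2) = 1 := by rw [pow_mul']; norm_num
  rw [h2j, h2i]

noncomputable def Pp (n i k : ℕ) : ℝ := ∏ m ∈ Finset.range ((i+1)/2), ((n:ℝ)+k+1-2*m)
noncomputable def Qq (n i k : ℕ) : ℝ := ∏ m ∈ Finset.range ((i-1)/2), ((n:ℝ)-k-1-2*m)
noncomputable def ee (n i k : ℕ) : ℝ :=
  ((-1:ℝ)^n / poch (-(n:ℝ)) i) *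
    (poch (-(n:ℝ)) k * poch ((n:ℝ)-(i:ℝ)+1) k / ((k.factorial:ℝ))^2) * Pp n i k * Qq n i k

lemma poly_id (n i : ℕ) (hodd : Odd i) (hin : i ≤ n) :
    (∑ k ∈ range (n+1), C (ee n i k) * ∏ j ∈ (range (n+1)).erase k, (X + C ((j:ℝ)+1)))
    = (∏ r ∈ range (n-i), (X - C ((r:ℝ)))) *
      (∏ m ∈ range ((i+1)/2), (C ((n:ℝ)-2*m) - X)) *
      (∏ m ∈ range ((i-1)/2), (C ((n:ℝ)-2*m) + X)) := by
  rw [← sub_eq_zero]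
  apply eq_zero_of_natDegree_lt_card_of_eval_eq_zero _
    (f := fun j : Fin (n+1) => -(((j:ℕ):ℝ)+1))
  · -- injective
    intro a b hab
    have hab' : -(((a:ℕ):ℝ)+1) = -(((b:ℕ):ℝ)+1) := hab
    have : ((a:ℕ):ℝ) = ((b:ℕ):ℝ) := by linarith
    exact Fin.ext (Nat.cast_injective this)
  · -- evals
    intro j
    rw [eval_sub, sub_eq_zero]
    have hj : (j:ℕ) ≤ n := by omega
    -- LHS eval
    rw [eval_finset_sum]
    rw [Finset.sum_eq_single (j:ℕ)]
    · rw [eval_mul, eval_C, eval_prod]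
      have hL : ∏ jj ∈ (range (n+1)).erase (j:ℕ), eval (-(((j:ℕ):ℝ)+1)) (X + C ((jj:ℝ)+1))
          = (-1)^(j:ℕ) * ((j:ℕ).factorial : ℝ) * ((n-(j:ℕ)).factorial : ℝ) := by
        rw [← prod_erase_sub hj]
        apply prod_congr rfl
        intro jj _
        simp only [eval_add, eval_X, eval_C]
        ring
      rw [hL]
      -- RHS eval
      rw [eval_mul, eval_mul, eval_prod, eval_prod, eval_prod]
      have h1 : ∏ r ∈ range (n-i), eval (-(((j:ℕ):ℝ)+1)) (X - C ((r:ℝ)))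
          = (-1)^(n-i) * poch (((j:ℕ):ℝ)+1) (n-i) := by
        have : ∀ r ∈ range (n-i), eval (-(((j:ℕ):ℝ)+1)) (X - C ((r:ℝ)))
            = (-1) * ((((j:ℕ):ℝ)+1) + r) := by
          intro r _; simp only [eval_sub, eval_X, eval_C]; ring
        rw [prod_congr rfl this, prod_mul_distrib, prod_const, card_range]
        congr 1
        rw [poch_eq_prod]
      have h2 : ∏ m ∈ range ((i+1)/2), eval (-(((j:ℕ):ℝ)+1)) (C ((n:ℝ)-2*m) - X) = Pp n i j := by
        rw [Pp]; apply prod_congr rfl; intro m _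
        simp only [eval_sub, eval_C, eval_X]; ring
      have h3 : ∏ m ∈ range ((i-1)/2), eval (-(((j:ℕ):ℝ)+1)) (C ((n:ℝ)-2*m) + X) = Qq n i j := by
        rw [Qq]; apply prod_congr rfl; intro m _
        simp only [eval_add, eval_C, eval_X]; ring
      rw [h1, h2, h3, ee]
      linear_combination (Pp n i (j:ℕ) * Qq n i (j:ℕ)) * scalar_id hin hj
    · intro k hk hkj
      rw [eval_mul, eval_prod]
      apply mul_eq_zero_of_right
      apply prod_eq_zero (i := (j:ℕ))
      · rw [mem_erase]; exact ⟨fun h => hkj h.symm, mem_range.mpr (by omega)⟩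
      · simp only [eval_add, eval_X, eval_C]; ring
    · intro hmem
      exact absurd (mem_range.mpr (by omega)) hmem
  · -- degree
    rw [Fintype.card_fin]
    have hL : (∑ k ∈ range (n+1), C (ee n i k) *
        ∏ j ∈ (range (n+1)).erase k, (X + C ((j:ℝ)+1))).natDegree ≤ n := by
      apply natDegree_sum_le_of_forall_le
      intro k hk
      refine le_trans (natDegree_C_mul_le _ _) (le_trans (natDegree_prod_le _ _) ?_)
      calc ∑ j ∈ (range (n+1)).erase k, (X + C ((j:ℝ)+1)).natDegree
          ≤ ∑ j ∈ (range (n+1)).erase k, 1 := by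
            apply Finset.sum_le_sum
            intro j _
            exact le_of_eq (natDegree_X_add_C _)
        _ = ((range (n+1)).erase k).card := by rw [Finset.sum_const, smul_eq_mul, mul_one]
        _ = n := by rw [card_erase_of_mem hk, card_range]; omega
    have hR : ((∏ r ∈ range (n-i), (X - C ((r:ℝ)))) *
        (∏ m ∈ range ((i+1)/2), (C ((n:ℝ)-2*m) - X)) *
        (∏ m ∈ range ((i-1)/2), (C ((n:ℝ)-2*m) + X))).natDegree ≤ n := by
      have b1 : (∏ r ∈ range (n-i), (X - C ((r:ℝ)))).natDegree ≤ n - i := by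
        refine le_trans (natDegree_prod_le _ _) ?_
        calc ∑ r ∈ range (n-i), (X - C ((r:ℝ))).natDegree
            ≤ ∑ r ∈ range (n-i), 1 := by
              apply Finset.sum_le_sum
              intro r _
              exact le_of_eq (natDegree_X_sub_C _)
          _ = n - i := by rw [Finset.sum_const, smul_eq_mul, mul_one, card_range]
      have b2 : (∏ m ∈ range ((i+1)/2), (C ((n:ℝ)-2*m) - X)).natDegree ≤ (i+1)/2 := by
        refine le_trans (natDegree_prod_le _ _) ?_
        calc ∑ m ∈ range ((i+1)/2), (C ((n:ℝ)-2*m) - X).natDegree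
            ≤ ∑ m ∈ range ((i+1)/2), 1 := by
              apply Finset.sum_le_sum
              intro m _
              refine le_trans (natDegree_sub_le _ _) ?_
              rw [natDegree_C, natDegree_X]
              simp
          _ = (i+1)/2 := by rw [Finset.sum_const, smul_eq_mul, mul_one, card_range]
      have b3 : (∏ m ∈ range ((i-1)/2), (C ((n:ℝ)-2*m) + X)).natDegree ≤ (i-1)/2 := by
        refine le_trans (natDegree_prod_le _ _) ?_
        calc ∑ m ∈ range ((i-1)/2), (C ((n:ℝ)-2*m) + X).natDegree
            ≤ ∑ m ∈ range ((i-1)/2), 1 := by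
              apply Finset.sum_le_sum
              intro m _
              refine le_trans (natDegree_add_le _ _) ?_
              rw [natDegree_C, natDegree_X]
              simp
          _ = (i-1)/2 := by rw [Finset.sum_const, smul_eq_mul, mul_one, card_range]
      refine le_trans (natDegree_mul_le) (le_trans (add_le_add (le_trans natDegree_mul_le
        (add_le_add b1 b2)) b3) ?_)
      obtain ⟨a, ha⟩ := hodd
      omega
    exact lt_of_le_of_lt (le_trans (natDegree_sub_le _ _) (max_le hL hR)) (by omega)

lemma core (n i s : ℕ) (hodd : Odd i) (hin : i ≤ n) (hs : n < s) :
    ∑ k ∈ range (n+1), ee n i k / ((k:ℝ)+s+1)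
      = (s.factorial:ℝ) / (((s-n+i).factorial:ℝ) * poch ((s:ℝ)+1) (n+1)) *
        (∏ m ∈ range ((i+1)/2), ((n:ℝ)-s-2*m)) *
        (∏ m ∈ range ((i-1)/2), ((n:ℝ)+s-2*m)) := by
  have hD : poch ((s:ℝ)+1) (n+1) = ∏ j ∈ range (n+1), ((s:ℝ)+1+j) := poch_eq_prod _ _
  have hDne : (∏ j ∈ range (n+1), ((s:ℝ)+1+j)) ≠ 0 :=
    prod_ne_zero_iff.mpr (fun j _ => by positivity)
  apply mul_right_cancel₀ hDne
  have hstep : (∑ k ∈ range (n+1), ee n i k / ((k:ℝ)+s+1)) * (∏ j ∈ range (n+1), ((s:ℝ)+1+j))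
      = ∑ k ∈ range (n+1), ee n i k * ∏ j ∈ (range (n+1)).erase k, ((s:ℝ)+1+j) := by
    rw [sum_mul]
    apply sum_congr rfl
    intro k hk
    rw [← mul_prod_erase (range (n+1)) (fun j => (s:ℝ)+1+j) hk]
    have hk0 : (k:ℝ)+(s:ℝ)+1 ≠ 0 := by positivity
    field_simp
    ring
  rw [hstep]
  have hP := congrArg (Polynomial.eval ((s:ℝ))) (poly_id n i hodd hin)
  simp only [eval_finset_sum, eval_prod, eval_mul, eval_add, eval_sub, eval_C, eval_X] at hP
  have hL : ∑ k ∈ range (n+1), ee n i k * ∏ j ∈ (range (n+1)).erase k, ((s:ℝ)+1+j)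
      = ∑ k ∈ range (n+1), ee n i k * ∏ j ∈ (range (n+1)).erase k, ((s:ℝ)+((j:ℝ)+1)) := by
    apply sum_congr rfl; intro k _
    congr 1
    apply prod_congr rfl; intro j _; ring
  rw [hL, hP]
  have hff : (∏ r ∈ range (n-i), ((s:ℝ) - r)) * ((s-n+i).factorial : ℝ) = (s.factorial:ℝ) := by
    have h1 : n - i ≤ s := by omega
    have h2 : s - (n-i) = s - n + i := by omega
    rw [← h2]
    exact prod_desc h1
  have hfne : ((s-n+i).factorial : ℝ) ≠ 0 := Nat.cast_ne_zero.mpr (Nat.factorial_ne_zero _)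
  rw [hD]
  field_simp
  rw [← hff]
  have hPv : ∏ m ∈ range ((i+1)/2), ((n:ℝ)-2*m-(s:ℝ)) = ∏ m ∈ range ((i+1)/2), ((n:ℝ)-s-2*m) := by
    apply prod_congr rfl; intro m _; ring
  have hQv : ∏ m ∈ range ((i-1)/2), ((n:ℝ)-2*m+(s:ℝ)) = ∏ m ∈ range ((i-1)/2), ((n:ℝ)+s-2*m) := by
    apply prod_congr rfl; intro m _; ring
  rw [← hPv, ← hQv]
  ring

lemma integral_step (n i s : ℕ) :
    ∫ t in (0:ℝ)..1, h n i t * (t ^ s / (s.factorial : ℝ))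
      = ∑ k ∈ range (n+1), d n i k / (((k:ℝ)+s+1) * (s.factorial : ℝ)) := by
  have hfun : (fun t : ℝ => h n i t * (t ^ s / (s.factorial : ℝ)))
      = fun t : ℝ => ∑ k ∈ range (n+1), (d n i k / (s.factorial : ℝ)) * t ^ (k+s) := by
    funext t
    rw [h, sum_mul]
    apply sum_congr rfl
    intro k _
    rw [pow_add]
    ring
  rw [hfun, intervalIntegral.integral_finset_sum]
  · apply sum_congr rfl
    intro k _
    rw [intervalIntegral.integral_const_mul, integral_pow]
    have : ((k:ℝ)+(s:ℝ))+1 ≠ 0 := by positivity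
    rw [one_pow, zero_pow (by omega : k+s+1 ≠ 0), sub_zero]
    push_cast
    rw [div_mul_div_comm, mul_one, mul_comm ((s.factorial:ℝ)) ((k:ℝ)+(s:ℝ)+1)]
  · intro k _
    exact (Continuous.intervalIntegrable (continuous_const.mul (continuous_pow _)) 0 1)


theorem stmt_10 (n i s : ℕ) (hodd : Odd i) (hi : 0 < i) (hin : i ≤ n)
    (hs : n < s) (hpar : Odd (s + (n - i))) :
    ∫ t in (0:ℝ)..1, h n i t * (t ^ s / (s.factorial : ℝ))
      = Real.sqrt (2 * (n : ℝ) - 2 * i + 1) /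
          (((s - n + i).factorial : ℝ) * poch ((s : ℝ) + 1) (n + 1)) *
        (∏ m ∈ Finset.range ((i + 1) / 2), ((n : ℝ) - s - 2 * m)) *
        (∏ m ∈ Finset.range ((i - 1) / 2), ((n : ℝ) + s - 2 * m)) := by
  have hd : ∀ k, d n i k = Real.sqrt (2 * (n : ℝ) - 2 * i + 1) * ee n i k := by
    intro k
    rw [d, ee, Pp, Qq]
    ring
  have hsf : (s.factorial : ℝ) ≠ 0 := Nat.cast_ne_zero.mpr (Nat.factorial_ne_zero _)
  have hfne : ((s-n+i).factorial : ℝ) ≠ 0 := Nat.cast_ne_zero.mpr (Nat.factorial_ne_zero _)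
  have hpoch : poch ((s:ℝ)+1) (n+1) ≠ 0 := by
    have := ascPochhammer_pos (n+1) ((s:ℝ)+1) (by positivity)
    exact ne_of_gt this
  rw [integral_step]
  have h1 : ∑ k ∈ range (n+1), d n i k / (((k:ℝ)+s+1) * (s.factorial : ℝ))
      = Real.sqrt (2 * (n : ℝ) - 2 * i + 1) / (s.factorial : ℝ) *
        ∑ k ∈ range (n+1), ee n i k / ((k:ℝ)+s+1) := by
    rw [mul_sum]
    apply sum_congr rfl
    intro k _
    rw [hd]
    have hk0 : ((k:ℝ)+(s:ℝ)+1) ≠ 0 := by positivity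
    field_simp
  rw [h1, core n i s hodd hin hs]
  field_simp
end
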